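/- Let A be an n×n complex matrix, let U be an n×k matrix with C = A U, suppose the n×(k+m+1) matrix [C V_{m+1}] has orthonormal columns (so C* C = I, V_{m+1}* V_{m+1} = I, and C* V_{m+1} = 0), let V_m be the first m columns of V_{m+1}, let H̄_m be an (m+1)×m matrix with (I − C C*) A V_m = V_{m+1} H̄_m, and set B_m = C* A V_m. Let x₀ ∈ ℂⁿ with r₀ = b − A x₀ = β V_{m+1} e₁ for some β ∈ ℂ. Then for every y ∈ ℂᵐ, b − A(x₀ − U B_m y + V_m y) = r₀ − V_{m+1} H̄_m y, and hence ‖b − A(x₀ − U B_m y + V_m y)‖₂ = ‖β e₁ − H̄_m y‖₂; thus the Recycled GMRES minimum residual corrections over the augmented space range(U) + range(V_m) are s_m = −U B_m y_m and t_m = V_m y_m with y_m minimizing ‖β e₁ − H̄_m y‖₂. -/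

import Mathlib

open Matrix

/-- Euclidean (2-) norm of a complex vector. -/
noncomputable def enorm {ι : Type*} [Fintype ι] (v : ι → ℂ) : ℝ :=
  ‖(WithLp.equiv 2 (ι → ℂ)).symm v‖

lemma enorm_mulVec_orth {n m : ℕ} (V : Matrix (Fin n) (Fin m) ℂ)
    (h : Vᴴ * V = 1) (z : Fin m → ℂ) : _root_.enorm (V.mulVec z) = _root_.enorm z := by
  have hdot : star (V.mulVec z) ⬝ᵥ V.mulVec z = star z ⬝ᵥ z := by
    rw [Matrix.star_mulVec, Matrix.dotProduct_mulVec, Matrix.vecMul_vecMul, h,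
      Matrix.vecMul_one]
  have hsq : ∀ {ι : Type} [Fintype ι] (v : ι → ℂ),
      _root_.enorm v = Real.sqrt (Complex.re (star v ⬝ᵥ v)) := by
    intro ι _ v
    rw [_root_.enorm, EuclideanSpace.norm_eq]
    congr 1
    rw [dotProduct, Complex.re_sum]
    refine Finset.sum_congr rfl fun i _ => ?_
    rw [Pi.star_apply, RCLike.star_def, mul_comm, Complex.mul_conj, Complex.ofReal_re,
      Complex.normSq_eq_norm_sq]
    rfl
  rw [hsq, hsq, hdot]

/-- In the Recycled GMRES setting — `C = A U`, the concatenation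
`[C  V_{m+1}]` has orthonormal columns (so `C* C = I`, `V_{m+1}* V_{m+1} = I`,
`C* V_{m+1} = 0`), `(I − C C*) A V_m = V_{m+1} H̄_m`, `B_m = C* A V_m`, and
`r₀ = b − A x₀ = β V_{m+1} e₁` — for every `y ∈ ℂᵐ` we have
`b − A(x₀ − U B_m y + V_m y) = r₀ − V_{m+1} H̄_m y`, and hence
`‖b − A(x₀ − U B_m y + V_m y)‖₂ = ‖β e₁ − H̄_m y‖₂`; thus the minimum residual
corrections over the augmented space are `s_m = −U B_m y_m`, `t_m = V_m y_m`
with `y_m` minimizing `‖β e₁ − H̄_m y‖₂`. -/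
theorem recycled_gmres_least_squares {n k m : ℕ}
    (A : Matrix (Fin n) (Fin n) ℂ)
    (U : Matrix (Fin n) (Fin k) ℂ)
    (C : Matrix (Fin n) (Fin k) ℂ)
    (hC : C = A * U)
    (V₁ : Matrix (Fin n) (Fin (m + 1)) ℂ)
    (hCorth : Cᴴ * C = 1)
    (hVorth : V₁ᴴ * V₁ = 1)
    (hCV : Cᴴ * V₁ = 0)
    (Vm : Matrix (Fin n) (Fin m) ℂ)
    (hV : Vm = V₁.submatrix id Fin.castSucc)
    (H : Matrix (Fin (m + 1)) (Fin m) ℂ)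
    (hArnoldi : ((1 : Matrix (Fin n) (Fin n) ℂ) - C * Cᴴ) * (A * Vm) = V₁ * H)
    (Bm : Matrix (Fin k) (Fin m) ℂ)
    (hB : Bm = Cᴴ * (A * Vm))
    (b x₀ r₀ : Fin n → ℂ) (β : ℂ)
    (hr₀ : r₀ = b - A.mulVec x₀)
    (hcol : r₀ = β • V₁.mulVec (Pi.single 0 1)) :
    ∀ y : Fin m → ℂ,
      b - A.mulVec (x₀ - U.mulVec (Bm.mulVec y) + Vm.mulVec y) =
          r₀ - (V₁ * H).mulVec y ∧
        _root_.enorm (b - A.mulVec (x₀ - U.mulVec (Bm.mulVec y) + Vm.mulVec y)) =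
          _root_.enorm (β • (Pi.single 0 1 : Fin (m + 1) → ℂ) - H.mulVec y) := by

  intro y
  have hAV : A * Vm = C * Bm + V₁ * H := by
    have h1 : A * Vm - C * (Cᴴ * (A * Vm)) = V₁ * H := by
      rw [← hArnoldi, Matrix.sub_mul, Matrix.one_mul, Matrix.mul_assoc]
    rw [hB]
    rw [← h1]; abel
  have hmain : b - A.mulVec (x₀ - U.mulVec (Bm.mulVec y) + Vm.mulVec y) =
      r₀ - (V₁ * H).mulVec y := by
    have h2 : A.mulVec (Vm.mulVec y) = (C * Bm).mulVec y + (V₁ * H).mulVec y := by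
      rw [Matrix.mulVec_mulVec, hAV, Matrix.add_mulVec, ← Matrix.mulVec_mulVec]
    have h3 : A.mulVec (U.mulVec (Bm.mulVec y)) = (C * Bm).mulVec y := by
      rw [Matrix.mulVec_mulVec, ← hC, Matrix.mulVec_mulVec]
    rw [Matrix.mulVec_add, Matrix.mulVec_sub, h2, h3, hr₀]
    abel
  refine ⟨hmain, ?_⟩
  rw [hmain, hcol]
  have : β • V₁.mulVec (Pi.single 0 1) - (V₁ * H).mulVec y =
      V₁.mulVec (β • (Pi.single 0 1 : Fin (m+1) → ℂ) - H.mulVec y) := by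
    rw [Matrix.mulVec_sub, Matrix.mulVec_smul, ← Matrix.mulVec_mulVec]
  rw [this, enorm_mulVec_orth V₁ hVorth]
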